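/- Let U ⊆ ℝ² be open and nonempty with coordinates (v,w), let a, b : U → ℝ be twice continuously differentiable and q, r, m, n : U → ℝ continuously differentiable, such that a_v, a_w, b_v, b_w, q, r are nowhere zero and a − b is nowhere zero. Let λ, μ be nonzero real constants with λ ≠ μ. Then it is impossible that simultaneously: (i) both (q,r) and (λq, μr) satisfy, with the same a, b, m, n, the equations (qr2): (q_v/q)_w = a_{vw}/(a−b) − (a_v(a_w+b_w) + a_w b_v)/(a−b)² + (a_w b_v/(a_v b_w)) m n + 2 a_w² r n/(a_v (a−b) q) and (r_v/r)_w = b_{vw}/(b−a) − (b_w(a_v+b_v) + a_w b_v)/(a−b)² + (a_w b_v/(a_v b_w)) m n + 2 b_v² q m/(b_w (b−a) r); and (ii) the first equation of (mn) holds on U: ∂_w((b_v/b_w) q m) − (b_v/b_w) q m (a_{vw}/a_v − a_w/(a−b)) + 2 n r a_w/(b−a) + 3 q a_v b_v/(a−b)² = 0. -/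

import Mathlib

/-- Partial derivative of `f : ℝⁿ → ℝ` in the `i`-th coordinate direction. -/
noncomputable def pd {n : ℕ} (i : Fin n) (f : (Fin n → ℝ) → ℝ) (x : Fin n → ℝ) : ℝ :=
  fderiv ℝ f x (Pi.single i 1)

/-- Coordinates on ℝ² are `(v,w)` with indices `(0,1)` (so subscript `v` = `pd 0`,
subscript `w` = `pd 1`).  `QR2 a b q r m n U` says that the equations (qr2):
`(q_v/q)_w = a_{vw}/(a−b) − (a_v(a_w+b_w) + a_w b_v)/(a−b)² + (a_w b_v/(a_v b_w)) m n
+ 2 a_w² r n/(a_v (a−b) q)` and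
`(r_v/r)_w = b_{vw}/(b−a) − (b_w(a_v+b_v) + a_w b_v)/(a−b)² + (a_w b_v/(a_v b_w)) m n
+ 2 b_v² q m/(b_w (b−a) r)` hold on `U`. -/
def QR2 (a b q r m n : (Fin 2 → ℝ) → ℝ) (U : Set (Fin 2 → ℝ)) : Prop :=
  ∀ x ∈ U,
    (pd 1 (fun y => pd 0 q y / q y) x =
      pd 1 (pd 0 a) x / (a x - b x)
      - (pd 0 a x * (pd 1 a x + pd 1 b x) + pd 1 a x * pd 0 b x) / (a x - b x) ^ 2
      + (pd 1 a x * pd 0 b x / (pd 0 a x * pd 1 b x)) * m x * n x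
      + 2 * (pd 1 a x) ^ 2 * r x * n x / (pd 0 a x * (a x - b x) * q x)) ∧
    (pd 1 (fun y => pd 0 r y / r y) x =
      pd 1 (pd 0 b) x / (b x - a x)
      - (pd 1 b x * (pd 0 a x + pd 0 b x) + pd 1 a x * pd 0 b x) / (a x - b x) ^ 2
      + (pd 1 a x * pd 0 b x / (pd 0 a x * pd 1 b x)) * m x * n x
      + 2 * (pd 0 b x) ^ 2 * q x * m x / (pd 1 b x * (b x - a x) * r x))

/-- `MN1 a b q r m n U`: the first equation of (mn),
`∂_w((b_v/b_w) q m) − (b_v/b_w) q m (a_{vw}/a_v − a_w/(a−b)) + 2 n r a_w/(b−a)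
+ 3 q a_v b_v/(a−b)² = 0`, holds on `U`. -/
def MN1 (a b q r m n : (Fin 2 → ℝ) → ℝ) (U : Set (Fin 2 → ℝ)) : Prop :=
  ∀ x ∈ U,
    pd 1 (fun y => (pd 0 b y / pd 1 b y) * q y * m y) x
    - (pd 0 b x / pd 1 b x) * q x * m x * (pd 1 (pd 0 a) x / pd 0 a x - pd 1 a x / (a x - b x))
    + 2 * n x * r x * pd 1 a x / (b x - a x)
    + 3 * q x * pd 0 a x * pd 0 b x / (a x - b x) ^ 2 = 0

lemma pd_const_mul {N : ℕ} (i : Fin N) (f : (Fin N → ℝ) → ℝ) (c : ℝ) (hc : c ≠ 0)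
    (y : Fin N → ℝ) : pd i (fun z => c * f z) y = c * pd i f y := by
  by_cases h : DifferentiableAt ℝ f y
  · unfold pd
    rw [fderiv_const_mul h c]
    simp
  · have h2 : ¬ DifferentiableAt ℝ (fun z => c * f z) y := by
      intro hcf
      have := hcf.const_mul c⁻¹
      simp only [← mul_assoc, inv_mul_cancel₀ hc, one_mul] at this
      exact h this
    unfold pd
    rw [fderiv_zero_of_not_differentiableAt h, fderiv_zero_of_not_differentiableAt h2]
    simp

lemma pd_eq_zero_of_eventually_zero {N : ℕ} (i : Fin N) (f : (Fin N → ℝ) → ℝ)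
    {U : Set (Fin N → ℝ)} (hU : IsOpen U) {x : Fin N → ℝ} (hx : x ∈ U)
    (hf : ∀ y ∈ U, f y = 0) : pd i f x = 0 := by
  have hev : f =ᶠ[nhds x] (fun _ => (0:ℝ)) :=
    Filter.eventually_of_mem (hU.mem_nhds hx) hf
  unfold pd
  rw [hev.fderiv_eq]
  simp

/-- On a nonempty open `U`, it is impossible that both `(q,r)` and the rescaled pair
`(λq, μr)` (with `λ, μ` nonzero constants, `λ ≠ μ`) satisfy the equations (qr2) with the
same `a, b, m, n`, while simultaneously the first equation of (mn) holds on `U`. -/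
theorem stmt19 (U : Set (Fin 2 → ℝ)) (hU : IsOpen U) (hUne : U.Nonempty)
    (a b q r m n : (Fin 2 → ℝ) → ℝ)
    (ha : ContDiffOn ℝ 2 a U) (hb : ContDiffOn ℝ 2 b U)
    (hq : ContDiffOn ℝ 1 q U) (hr : ContDiffOn ℝ 1 r U)
    (hm : ContDiffOn ℝ 1 m U) (hn : ContDiffOn ℝ 1 n U)
    (hav : ∀ x ∈ U, pd 0 a x ≠ 0) (haw : ∀ x ∈ U, pd 1 a x ≠ 0)
    (hbv : ∀ x ∈ U, pd 0 b x ≠ 0) (hbw : ∀ x ∈ U, pd 1 b x ≠ 0)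
    (hq0 : ∀ x ∈ U, q x ≠ 0) (hr0 : ∀ x ∈ U, r x ≠ 0)
    (hab : ∀ x ∈ U, a x - b x ≠ 0)
    (lam mu : ℝ) (hlam : lam ≠ 0) (hmu : mu ≠ 0) (hlm : lam ≠ mu) :
    ¬ (QR2 a b q r m n U ∧
       QR2 a b (fun y => lam * q y) (fun y => mu * r y) m n U ∧
       MN1 a b q r m n U) := by
  rintro ⟨hQ, hQ', hM⟩
  -- n vanishes on U
  have hn0 : ∀ x ∈ U, n x = 0 := by
    intro x hx
    have h1 := (hQ x hx).1
    have h2 := (hQ' x hx).1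
    simp only at h2
    have hfun : (fun y => pd 0 (fun z => lam * q z) y / (lam * q y))
        = fun y => pd 0 q y / q y := by
      funext y
      rw [pd_const_mul 0 q lam hlam y, mul_div_mul_left _ _ hlam]
    rw [hfun] at h2
    set T := 2 * (pd 1 a x) ^ 2 * r x * n x / (pd 0 a x * (a x - b x) * q x) with hTdef
    have hT : 2 * (pd 1 a x) ^ 2 * (mu * r x) * n x / (pd 0 a x * (a x - b x) * (lam * q x))
        = (mu / lam) * T := by
      rw [hTdef]
      field_simp
    rw [hT] at h2
    have hTT : T = (mu / lam) * T := by linarith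
    have hT0 : T = 0 := by
      have hne : (1 : ℝ) - mu / lam ≠ 0 := by
        intro h
        apply hlm
        have : mu / lam = 1 := by linarith
        field_simp at this
        linarith
      have : T * (1 - mu / lam) = 0 := by linear_combination hTT
      exact (mul_eq_zero.mp this).resolve_right hne
    rw [hTdef, div_eq_zero_iff] at hT0
    have hden : pd 0 a x * (a x - b x) * q x ≠ 0 :=
      mul_ne_zero (mul_ne_zero (hav x hx) (hab x hx)) (hq0 x hx)
    have hnum := hT0.resolve_right hden
    have h2ne : (2 : ℝ) * (pd 1 a x) ^ 2 * r x ≠ 0 :=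
      mul_ne_zero (mul_ne_zero two_ne_zero (pow_ne_zero 2 (haw x hx))) (hr0 x hx)
    exact (mul_eq_zero.mp hnum).resolve_left h2ne
  -- m vanishes on U
  have hm0 : ∀ x ∈ U, m x = 0 := by
    intro x hx
    have h1 := (hQ x hx).2
    have h2 := (hQ' x hx).2
    simp only at h2
    have hfun : (fun y => pd 0 (fun z => mu * r z) y / (mu * r y))
        = fun y => pd 0 r y / r y := by
      funext y
      rw [pd_const_mul 0 r mu hmu y, mul_div_mul_left _ _ hmu]
    rw [hfun] at h2
    set T := 2 * (pd 0 b x) ^ 2 * q x * m x / (pd 1 b x * (b x - a x) * r x) with hTdef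
    have hba : b x - a x ≠ 0 := by
      intro h; apply hab x hx; linarith
    have hT : 2 * (pd 0 b x) ^ 2 * (lam * q x) * m x / (pd 1 b x * (b x - a x) * (mu * r x))
        = (lam / mu) * T := by
      rw [hTdef]
      field_simp
    rw [hT] at h2
    have hTT : T = (lam / mu) * T := by linarith
    have hT0 : T = 0 := by
      have hne : (1 : ℝ) - lam / mu ≠ 0 := by
        intro h
        apply hlm
        have : lam / mu = 1 := by linarith
        field_simp at this
        linarith
      have : T * (1 - lam / mu) = 0 := by linear_combination hTT
      exact (mul_eq_zero.mp this).resolve_right hne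
    rw [hTdef, div_eq_zero_iff] at hT0
    have hden : pd 1 b x * (b x - a x) * r x ≠ 0 :=
      mul_ne_zero (mul_ne_zero (hbw x hx) hba) (hr0 x hx)
    have hnum := hT0.resolve_right hden
    have h2ne : (2 : ℝ) * (pd 0 b x) ^ 2 * q x ≠ 0 :=
      mul_ne_zero (mul_ne_zero two_ne_zero (pow_ne_zero 2 (hbv x hx))) (hq0 x hx)
    exact (mul_eq_zero.mp hnum).resolve_left h2ne
  -- contradiction from MN1
  obtain ⟨x0, hx0⟩ := hUne
  have hM0 := hM x0 hx0
  have hpd0 : pd 1 (fun y => (pd 0 b y / pd 1 b y) * q y * m y) x0 = 0 := by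
    apply pd_eq_zero_of_eventually_zero _ _ hU hx0
    intro y hy
    rw [hm0 y hy, mul_zero]
  rw [hpd0, hm0 x0 hx0, hn0 x0 hx0] at hM0
  simp only [mul_zero, zero_mul, zero_div, zero_sub, zero_mul, mul_zero, zero_div] at hM0
  have hM1 : 3 * q x0 * pd 0 a x0 * pd 0 b x0 / (a x0 - b x0) ^ 2 = 0 := by linarith
  rw [div_eq_zero_iff] at hM1
  rcases hM1 with h | h
  · have : (3 : ℝ) * q x0 * pd 0 a x0 * pd 0 b x0 ≠ 0 :=
      mul_ne_zero (mul_ne_zero (mul_ne_zero three_ne_zero (hq0 x0 hx0)) (hav x0 hx0))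
        (hbv x0 hx0)
    exact this h
  · exact pow_ne_zero 2 (hab x0 hx0) h
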